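/- Let 2 ≤ d < n and let P = P(1,d;n). If w is a fractional local realizer of P and c = μ(P,w), then: Σ_{M ∈ ple(P)} a(M)·w(M) ≤ c·n, Σ_{M ∈ ple(P)} b(M)·w(M) ≤ c·C(n,d), Σ_{M ∈ ple(P)} r(M)·w(M) ≥ n·C(n−1,d), and Σ_{M ∈ ple(P)} q(M)·w(M) ≥ n·C(n,d). -/

import Mathlib

noncomputable section

/-- A partial linear extension (ple) of a poset, encoded as a list of distinct elements:
the list order is the linear order, and it must extend the poset order on its members. -/
def IsPLE (α : Type*) [PartialOrder α] [DecidableEq α] (l : List α) : Prop :=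
  l.Nodup ∧ ∀ x ∈ l, ∀ y ∈ l, x < y → l.idxOf x < l.idxOf y

/-- `u ≤ v` in the ple `l`. -/
def pleLE {α : Type*} [DecidableEq α] (l : List α) (u v : α) : Prop :=
  u ∈ l ∧ v ∈ l ∧ l.idxOf u ≤ l.idxOf v

/-- `u < v` in the ple `l`. -/
def pleLT {α : Type*} [DecidableEq α] (l : List α) (u v : α) : Prop :=
  u ∈ l ∧ v ∈ l ∧ l.idxOf u < l.idxOf v

/-- A local weight function: assigns to each ple of the poset a weight in [0,1]. -/
structure LocalWeight (α : Type*) [PartialOrder α] [DecidableEq α] where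
  w : List α → ℝ
  nonneg : ∀ l, 0 ≤ w l
  le_one : ∀ l, w l ≤ 1
  supp : ∀ l, ¬ IsPLE α l → w l = 0

/-- local measure μ(u,w): total weight of ple's containing `u`. -/
def localMeasure {α : Type*} [PartialOrder α] [DecidableEq α] (W : LocalWeight α) (u : α) : ℝ :=
  ∑ᶠ l ∈ {l : List α | IsPLE α l ∧ u ∈ l}, W.w l

/-- μ(P,w): the maximum local measure over elements of the poset. -/
def maxLocalMeasure {α : Type*} [PartialOrder α] [DecidableEq α] [Fintype α]
    (W : LocalWeight α) : ℝ :=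
  ⨆ u : α, localMeasure W u

/-- A fractional local realizer. -/
def IsFLRealizer {α : Type*} [PartialOrder α] [DecidableEq α] (W : LocalWeight α) : Prop :=
  (∀ u v : α, u ≤ v →
    1 ≤ ∑ᶠ l ∈ {l : List α | IsPLE α l ∧ pleLE l u v}, W.w l) ∧
  (∀ u v : α, ¬ u ≤ v → ¬ v ≤ u →
    1 ≤ ∑ᶠ l ∈ {l : List α | IsPLE α l ∧ pleLT l v u}, W.w l)

/-- The fractional local dimension of a finite poset. -/
def fldim (α : Type*) [PartialOrder α] [DecidableEq α] [Fintype α] : ℝ :=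
  sInf {c : ℝ | ∃ W : LocalWeight α, IsFLRealizer W ∧ maxLocalMeasure W = c}

/-- The poset P(1,d;n): all 1-element and d-element subsets of {1,…,n}, ordered by inclusion. -/
abbrev PosetOneDN (d n : ℕ) := {S : Finset (Fin n) // S.card = 1 ∨ S.card = d}

/-- fldim(1,d;n). -/
def fldim1dn (d n : ℕ) : ℝ := fldim (PosetOneDN d n)

end

open scoped Classical

/-- a(M): number of minimal elements (singletons) of P(1,d;n) occurring in the ple M. -/
noncomputable def aCount (d n : ℕ) (l : List (PosetOneDN d n)) : ℕ :=
  (l.filter (fun S => S.val.card = 1)).length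

/-- b(M): number of maximal elements (d-element sets) of P(1,d;n) occurring in M. -/
noncomputable def bCount (d n : ℕ) (l : List (PosetOneDN d n)) : ℕ :=
  (l.filter (fun S => S.val.card = d)).length

/-- r(M): number of pairs (u,S) with u a singleton, S a d-set, and u > S in M. -/
noncomputable def rCount (d n : ℕ) (l : List (PosetOneDN d n)) : ℕ :=
  ((Finset.univ ×ˢ Finset.univ).filter
    (fun p : PosetOneDN d n × PosetOneDN d n =>
      p.1.val.card = 1 ∧ p.2.val.card = d ∧ pleLT l p.2 p.1)).card

/-- q(M): number of pairs (u,S) with u a singleton, S a d-set, and u < S in M. -/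
noncomputable def qCount (d n : ℕ) (l : List (PosetOneDN d n)) : ℕ :=
  ((Finset.univ ×ˢ Finset.univ).filter
    (fun p : PosetOneDN d n × PosetOneDN d n =>
      p.1.val.card = 1 ∧ p.2.val.card = d ∧ pleLT l p.1 p.2)).card

open Finset in
lemma ple_finite (β : Type*) [PartialOrder β] [DecidableEq β] [Fintype β] :
    {l : List β | IsPLE β l}.Finite :=
  (List.finite_length_le β (Fintype.card β)).subset fun _ hl => hl.1.length_le_card

open Finset in
lemma finsum_ple {β : Type*} [PartialOrder β] [DecidableEq β] [Fintype β]
    (p : List β → Prop) (f : List β → ℝ) :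
    ∑ᶠ l ∈ {l : List β | IsPLE β l ∧ p l}, f l
      = ∑ l ∈ (ple_finite β).toFinset.filter p, f l := by
  have h : {l : List β | IsPLE β l ∧ p l}
      = ↑((ple_finite β).toFinset.filter p) := by
    ext l; simp [Set.Finite.mem_toFinset]
  rw [h, finsum_mem_coe_finset]

lemma localMeasure_le {β : Type*} [PartialOrder β] [DecidableEq β] [Fintype β]
    (W : LocalWeight β) (u : β) : localMeasure W u ≤ maxLocalMeasure W :=
  le_ciSup (Finite.bddAbove_range _) u

open Finset in
lemma count_card {d n k : ℕ} (hk : k = 1 ∨ k = d) :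
    (Finset.univ.filter (fun u : PosetOneDN d n => u.val.card = k)).card = n.choose k := by
  rw [Finset.card_nbij (fun u => u.val)
      (t := Finset.univ.filter (fun S : Finset (Fin n) => S.card = k)) ?_ ?_ ?_]
  · rw [← Finset.powerset_univ, ← Finset.powersetCard_eq_filter, Finset.card_powersetCard,
      Finset.card_univ, Fintype.card_fin]
  · intro u hu; simp only [mem_coe, mem_filter, mem_univ, true_and] at hu ⊢; exact hu
  · intro u _ v _ h; exact Subtype.ext h
  · intro S hS
    simp only [coe_filter, Set.mem_setOf_eq, mem_univ, true_and] at hS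
    refine ⟨⟨S, ?_⟩, ?_, rfl⟩
    · rcases hk with rfl | rfl
      · exact Or.inl hS
      · exact Or.inr hS
    · simp [hS]

open Finset in
lemma count_incomp {d n : ℕ} (u : PosetOneDN d n) (hu : u.val.card = 1) :
    (Finset.univ.filter (fun S : PosetOneDN d n => S.val.card = d ∧ ¬ u ≤ S)).card
      = (n-1).choose d := by
  obtain ⟨x, hx⟩ := Finset.card_eq_one.mp hu
  have hmem : ∀ S : PosetOneDN d n, (¬ u ≤ S) ↔ x ∉ S.val := by
    intro S
    rw [← Subtype.coe_le_coe, hx, Finset.le_iff_subset, Finset.singleton_subset_iff]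
  rw [Finset.card_nbij (fun S => S.val)
      (t := Finset.powersetCard d ((Finset.univ : Finset (Fin n)).erase x)) ?_ ?_ ?_]
  · rw [Finset.card_powersetCard, Finset.card_erase_of_mem (mem_univ x), Finset.card_univ,
      Fintype.card_fin]
  · intro S hS
    simp only [mem_coe, mem_filter, mem_univ, true_and, hmem] at hS
    rw [Finset.mem_coe, Finset.mem_powersetCard, Finset.subset_erase]
    exact ⟨⟨Finset.subset_univ _, hS.2⟩, hS.1⟩
  · intro S _ T _ h; exact Subtype.ext h
  · intro T hT
    rw [Finset.mem_coe, Finset.mem_powersetCard, Finset.subset_erase] at hT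
    obtain ⟨⟨-, hx'⟩, hcard⟩ := hT
    refine ⟨⟨T, Or.inr hcard⟩, ?_, rfl⟩
    simp only [coe_filter, Set.mem_setOf_eq, mem_univ, true_and, hmem]
    exact ⟨hcard, hx'⟩

/-- Constraints A, B, R, Q hold for any fractional local realizer of
P(1,d;n) with cost c = μ(P,w). -/
theorem lp_constraints (d n : ℕ) (hd : 2 ≤ d) (hn : d < n)
    (W : LocalWeight (PosetOneDN d n)) (hW : IsFLRealizer W)
    (c : ℝ) (hc : c = maxLocalMeasure W) :
    (∑ᶠ l ∈ {l : List (PosetOneDN d n) | IsPLE (PosetOneDN d n) l},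
        (aCount d n l : ℝ) * W.w l) ≤ c * n ∧
    (∑ᶠ l ∈ {l : List (PosetOneDN d n) | IsPLE (PosetOneDN d n) l},
        (bCount d n l : ℝ) * W.w l) ≤ c * (n.choose d) ∧
    (n : ℝ) * ((n - 1).choose d) ≤
      (∑ᶠ l ∈ {l : List (PosetOneDN d n) | IsPLE (PosetOneDN d n) l},
        (rCount d n l : ℝ) * W.w l) ∧
    (n : ℝ) * (n.choose d) ≤
      (∑ᶠ l ∈ {l : List (PosetOneDN d n) | IsPLE (PosetOneDN d n) l},
        (qCount d n l : ℝ) * W.w l) := by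
  classical
  set L := (ple_finite (PosetOneDN d n)).toFinset with hLdef
  have houter : ∀ f : List (PosetOneDN d n) → ℝ,
      ∑ᶠ l ∈ {l : List (PosetOneDN d n) | IsPLE (PosetOneDN d n) l}, f l = ∑ l ∈ L, f l := by
    intro f
    have h := finsum_ple (β := PosetOneDN d n) (fun _ => True) f
    simpa using h
  have hmu : ∀ u : PosetOneDN d n,
      (∑ l ∈ L, if u ∈ l then W.w l else 0) ≤ c := by
    intro u
    have h : localMeasure W u ≤ c := hc ▸ localMeasure_le W u
    simp only [localMeasure] at h
    rw [finsum_ple, Finset.sum_filter] at h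
    refine le_trans (le_of_eq ?_) h
    refine Finset.sum_congr rfl fun l _ => ?_
    by_cases hm : u ∈ l <;> simp [hm]
  -- upper bounds A and B
  have hAB : ∀ k : ℕ,
      (∑ l ∈ L, (((l.filter (fun S : PosetOneDN d n => S.val.card = k)).length : ℕ) : ℝ) * W.w l)
      ≤ c * ((Finset.univ.filter (fun u : PosetOneDN d n => u.val.card = k)).card : ℝ) := by
    intro k
    set Pk := Finset.univ.filter (fun u : PosetOneDN d n => u.val.card = k) with hPk
    have step : ∀ l ∈ L, (((l.filter (fun S : PosetOneDN d n => S.val.card = k)).length : ℕ) : ℝ) * W.w l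
        = ∑ u ∈ Pk, if u ∈ l then W.w l else 0 := by
      intro l hl
      have hnd : l.Nodup := ((Set.Finite.mem_toFinset _).mp hl).1
      have h1 : (l.filter (fun S : PosetOneDN d n => S.val.card = k)).length
          = (Pk.filter (fun u => u ∈ l)).card := by
        rw [← List.toFinset_card_of_nodup (List.Nodup.filter _ hnd), List.toFinset_filter]
        congr 1
        ext u
        simp [hPk, and_comm]
      rw [h1, Finset.card_filter]
      push_cast
      rw [Finset.sum_mul]
      refine Finset.sum_congr rfl fun u _ => ?_
      by_cases h : u ∈ l <;> simp [h]
    rw [Finset.sum_congr rfl step, Finset.sum_comm]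
    calc ∑ u ∈ Pk, ∑ l ∈ L, (if u ∈ l then W.w l else 0)
        ≤ ∑ _u ∈ Pk, c := Finset.sum_le_sum fun u _ => hmu u
      _ = Pk.card * c := by rw [Finset.sum_const, nsmul_eq_mul]
      _ = c * Pk.card := mul_comm _ _
  -- generic lower bound for pair sums
  have hpair : ∀ (Cnd : PosetOneDN d n × PosetOneDN d n → List (PosetOneDN d n) → Prop)
      (I : Finset (PosetOneDN d n × PosetOneDN d n)),
      (∀ p ∈ I, p.1.val.card = 1 ∧ p.2.val.card = d) →
      (∀ p ∈ I, (1:ℝ) ≤ ∑ l ∈ L.filter (fun l => Cnd p l), W.w l) →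
      (I.card : ℝ) ≤ ∑ p ∈ Finset.univ ×ˢ Finset.univ,
        ∑ l ∈ L, (if (p.1.val.card = 1 ∧ p.2.val.card = d ∧ Cnd p l) then W.w l else 0) := by
    intro Cnd I hcards hone
    calc (I.card : ℝ) = ∑ _p ∈ I, (1:ℝ) := by simp
      _ ≤ ∑ p ∈ I, ∑ l ∈ L,
            (if (p.1.val.card = 1 ∧ p.2.val.card = d ∧ Cnd p l) then W.w l else 0) := by
          refine Finset.sum_le_sum fun p hp => ?_
          refine le_trans (hone p hp) ?_
          rw [Finset.sum_filter]
          refine Finset.sum_le_sum fun l _ => ?_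
          obtain ⟨h1, h2⟩ := hcards p hp
          by_cases h : Cnd p l <;> simp [h, h1, h2]
      _ ≤ ∑ p ∈ Finset.univ ×ˢ Finset.univ, ∑ l ∈ L,
            (if (p.1.val.card = 1 ∧ p.2.val.card = d ∧ Cnd p l) then W.w l else 0) := by
          refine Finset.sum_le_sum_of_subset_of_nonneg (fun p _ => by simp) ?_
          intro p _ _
          refine Finset.sum_nonneg fun l _ => ?_
          split
          · exact W.nonneg l
          · exact le_refl 0
  -- conversion of pair-count sums
  have hconv : ∀ (Cnd : PosetOneDN d n × PosetOneDN d n → List (PosetOneDN d n) → Prop),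
      (∑ l ∈ L, ((((Finset.univ ×ˢ Finset.univ).filter
        (fun p : PosetOneDN d n × PosetOneDN d n =>
          p.1.val.card = 1 ∧ p.2.val.card = d ∧ Cnd p l)).card : ℝ) * W.w l))
      = ∑ p ∈ Finset.univ ×ˢ Finset.univ,
          ∑ l ∈ L, (if (p.1.val.card = 1 ∧ p.2.val.card = d ∧ Cnd p l) then W.w l else 0) := by
    intro Cnd
    rw [← Finset.sum_comm]
    refine Finset.sum_congr rfl fun l _ => ?_
    rw [Finset.card_filter]
    push_cast
    rw [Finset.sum_mul]
    refine Finset.sum_congr rfl fun p _ => ?_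
    by_cases h : (p.1.val.card = 1 ∧ p.2.val.card = d ∧ Cnd p l) <;> simp [h]
  refine ⟨?_, ?_, ?_, ?_⟩
  · -- A
    rw [houter]
    have h := hAB 1
    rw [count_card (Or.inl rfl), Nat.choose_one_right] at h
    unfold aCount
    exact h
  · -- B
    rw [houter]
    have h := hAB d
    rw [count_card (Or.inr rfl)] at h
    unfold bCount
    exact h
  · -- R
    rw [houter]
    set I := (Finset.univ ×ˢ Finset.univ).filter
      (fun p : PosetOneDN d n × PosetOneDN d n =>
        p.1.val.card = 1 ∧ p.2.val.card = d ∧ ¬ p.1 ≤ p.2) with hI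
    have hIcard : I.card = n * (n - 1).choose d := by
      rw [hI, Finset.card_filter, Finset.sum_product]
      have this1 : ∀ u : PosetOneDN d n,
          (∑ S : PosetOneDN d n, if (u.val.card = 1 ∧ S.val.card = d ∧ ¬ u ≤ S) then 1 else 0)
          = if u.val.card = 1 then (n-1).choose d else 0 := by
        intro u
        by_cases h : u.val.card = 1
        · simp only [h, true_and, if_true]
          rw [← count_incomp u h, Finset.card_filter]
        · simp [h]
      rw [Finset.sum_congr rfl fun u _ => this1 u, ← Finset.sum_filter,
        Finset.sum_const, count_card (Or.inl rfl), Nat.choose_one_right, smul_eq_mul]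
    have hone : ∀ p ∈ I, (1:ℝ) ≤ ∑ l ∈ L.filter (fun l => pleLT l p.2 p.1), W.w l := by
      intro p hp
      rw [hI, Finset.mem_filter] at hp
      obtain ⟨-, h1, h2, h3⟩ := hp
      have hle2 : ¬ p.2 ≤ p.1 := by
        intro h
        have := Finset.card_le_card (Finset.le_iff_subset.mp (Subtype.coe_le_coe.mpr h))
        omega
      have h := hW.2 p.1 p.2 h3 hle2
      rw [finsum_ple] at h
      exact h
    have hcards : ∀ p ∈ I, p.1.val.card = 1 ∧ p.2.val.card = d := by
      intro p hp
      rw [hI, Finset.mem_filter] at hp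
      exact ⟨hp.2.1, hp.2.2.1⟩
    calc (n : ℝ) * ((n-1).choose d) = (I.card : ℝ) := by rw [hIcard]; push_cast; ring
      _ ≤ _ := hpair _ I hcards hone
      _ = ∑ l ∈ L, ((rCount d n l : ℕ) : ℝ) * W.w l := by
          rw [← hconv (fun p l => pleLT l p.2 p.1)]
          rfl
  · -- Q
    rw [houter]
    set J := (Finset.univ ×ˢ Finset.univ).filter
      (fun p : PosetOneDN d n × PosetOneDN d n =>
        p.1.val.card = 1 ∧ p.2.val.card = d) with hJ
    have hJcard : J.card = n * n.choose d := by
      rw [hJ, Finset.filter_product (fun a : PosetOneDN d n => a.val.card = 1)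
        (fun a : PosetOneDN d n => a.val.card = d), Finset.card_product, count_card (Or.inl rfl),
        count_card (Or.inr rfl), Nat.choose_one_right]
    have hone : ∀ p ∈ J, (1:ℝ) ≤ ∑ l ∈ L.filter (fun l => pleLT l p.1 p.2), W.w l := by
      intro p hp
      rw [hJ, Finset.mem_filter] at hp
      obtain ⟨-, h1, h2⟩ := hp
      have hne : p.1 ≠ p.2 := by
        intro h
        rw [h, h2] at h1
        omega
      by_cases hle : p.1 ≤ p.2
      · have h := hW.1 p.1 p.2 hle
        have hset : {l : List (PosetOneDN d n) | IsPLE (PosetOneDN d n) l ∧ pleLE l p.1 p.2}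
            = {l | IsPLE (PosetOneDN d n) l ∧ pleLT l p.1 p.2} := by
          ext l
          simp only [Set.mem_setOf_eq, and_congr_right_iff]
          intro _
          constructor
          · rintro ⟨hu, hv, hle'⟩
            exact ⟨hu, hv, lt_of_le_of_ne hle'
              (fun heq => hne ((@List.idxOf_inj _ instBEqOfDecidableEq _ _ _ _ hu).mp heq))⟩
          · rintro ⟨hu, hv, hlt⟩
            exact ⟨hu, hv, hlt.le⟩
        rw [hset, finsum_ple] at h
        exact h
      · have hle2 : ¬ p.2 ≤ p.1 := by
          intro h
          have := Finset.card_le_card (Finset.le_iff_subset.mp (Subtype.coe_le_coe.mpr h))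
          omega
        have h := hW.2 p.2 p.1 hle2 hle
        rw [finsum_ple] at h
        exact h
    have hcards : ∀ p ∈ J, p.1.val.card = 1 ∧ p.2.val.card = d := by
      intro p hp
      rw [hJ, Finset.mem_filter] at hp
      exact hp.2
    calc (n : ℝ) * (n.choose d) = (J.card : ℝ) := by rw [hJcard]; push_cast; ring
      _ ≤ _ := hpair _ J hcards hone
      _ = ∑ l ∈ L, ((qCount d n l : ℕ) : ℝ) * W.w l := by
          rw [← hconv (fun p l => pleLT l p.1 p.2)]
          rfl
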